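/- There exists a non-Archimedean probability-like counterexample showing an NAP function cannot match every Popper function on the same sample space: define P₁(A) = ε·δ₀(A) + (1−ε)·Σ_{n∈A, n≥1} 2^{−n} on subsets of ℕ, where ε is a positive infinitesimal in a non-Archimedean field extension of ℝ and δ₀(A) = 1 if 0 ∈ A, 0 otherwise. Then P₁ is a regular, finitely additive probability function, and P₁({0} | {0,1}) = P₁({0})/P₁({0,1}) is a positive infinitesimal, so st(P₁({0}|{0,1})) = 0. -/

import Mathlib

open scoped Classical

/-- `Σ_{n ∈ A, n ≥ 1} 2^{-n}` as a real number. -/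
noncomputable def geomPart (A : Set ℕ) : ℝ :=
  ∑' n : ℕ, Set.indicator (A ∩ {n : ℕ | 1 ≤ n}) (fun n => (1 / 2 : ℝ) ^ n) n

lemma geomPart_summable (A : Set ℕ) :
    Summable (Set.indicator (A ∩ {n : ℕ | 1 ≤ n}) (fun n => (1 / 2 : ℝ) ^ n)) :=
  summable_geometric_two.indicator _

lemma geomPart_nonneg (A : Set ℕ) : 0 ≤ geomPart A :=
  tsum_nonneg fun n => Set.indicator_nonneg (fun m _ => by positivity) n

lemma geomPart_ge (A : Set ℕ) {n : ℕ} (hn : n ∈ A) (h1 : 1 ≤ n) :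
    (1/2:ℝ)^n ≤ geomPart A := by
  have := Summable.le_tsum (geomPart_summable A) n
    (fun m _ => Set.indicator_nonneg (fun m _ => by positivity) m)
  unfold geomPart
  simpa [Set.indicator_of_mem, Set.mem_inter_iff, Set.mem_setOf_eq, hn, h1] using this

lemma geomPart_union {A B : Set ℕ} (h : Disjoint A B) :
    geomPart (A ∪ B) = geomPart A + geomPart B := by
  unfold geomPart
  rw [← Summable.tsum_add (geomPart_summable A) (geomPart_summable B)]
  congr 1
  funext n
  have hd : Disjoint (A ∩ {n : ℕ | 1 ≤ n}) (B ∩ {n : ℕ | 1 ≤ n}) :=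
    (h.mono (Set.inter_subset_left) (Set.inter_subset_left))
  rw [Set.union_inter_distrib_right, Set.indicator_union_of_disjoint hd]

lemma geomPart_univ : geomPart (Set.univ : Set ℕ) = 1 := by
  unfold geomPart
  rw [Summable.tsum_eq_zero_add (geomPart_summable _)]
  have h0 : Set.indicator (Set.univ ∩ {n : ℕ | 1 ≤ n}) (fun n => (1 / 2 : ℝ) ^ n) 0 = 0 := by
    simp
  rw [h0, zero_add]
  have : ∀ n : ℕ, Set.indicator (Set.univ ∩ {n : ℕ | 1 ≤ n})
      (fun n => (1 / 2 : ℝ) ^ n) (n + 1) = (1/2:ℝ) * (1/2)^n := by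
    intro n
    rw [Set.indicator_of_mem (by simp)]
    ring
  simp_rw [this]
  rw [tsum_mul_left, tsum_geometric_two]
  norm_num

lemma geomPart_zero : geomPart ({0} : Set ℕ) = 0 := by
  unfold geomPart
  convert tsum_zero with n
  rw [Set.indicator_of_notMem]
  rintro ⟨h1, h2⟩
  simp at h1 h2
  omega

lemma geomPart_pair : geomPart ({0, 1} : Set ℕ) = 1/2 := by
  unfold geomPart
  rw [tsum_eq_single 1]
  · rw [Set.indicator_of_mem (by simp)]
    norm_num
  · intro n hn
    rw [Set.indicator_of_notMem]
    rintro ⟨h1, h2⟩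
    simp at h1 h2
    omega

/-- Pedersen's counterexample: `P₁(A) = ε·δ₀(A) + (1−ε)·Σ_{n∈A, n≥1} 2^{−n}`
is a regular finitely additive probability function on `ℕ` whose conditional
probability `P₁({0}|{0,1})` is a positive infinitesimal (so its standard part is 0). -/
theorem stmt6 {K : Type*} [Field K] [LinearOrder K] [IsStrictOrderedRing K]
    (ι : ℝ →+* K) (hι : StrictMono ι)
    (ε : K) (hε0 : 0 < ε) (hεinf : ∀ n : ℕ, 0 < n → ε < ι (1 / n))
    (P₁ : Set ℕ → K)
    (hP₁ : ∀ A : Set ℕ,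
      P₁ A = ε * (if (0 : ℕ) ∈ A then 1 else 0) + (1 - ε) * ι (geomPart A)) :
    (∀ A : Set ℕ, A.Nonempty → 0 < P₁ A) ∧
    (∀ A B : Set ℕ, Disjoint A B → P₁ (A ∪ B) = P₁ A + P₁ B) ∧
    P₁ Set.univ = 1 ∧
    (0 < P₁ {0} / P₁ {0, 1} ∧ ∀ n : ℕ, 0 < n → P₁ {0} / P₁ {0, 1} < ι (1 / n)) := by
  have hε1 : ε < 1 := by
    have := hεinf 1 one_pos
    simpa using this
  have h1ε : 0 < 1 - ε := by linarith
  have hι0 : ι 0 = 0 := map_zero ι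
  have hιnonneg : ∀ x : ℝ, 0 ≤ x → 0 ≤ ι x := fun x hx => hι0 ▸ hι.monotone hx
  have hιpos : ∀ x : ℝ, 0 < x → 0 < ι x := fun x hx => hι0 ▸ hι hx
  have hP0 : P₁ {0} = ε := by
    rw [hP₁, geomPart_zero]
    simp
  have hP01 : P₁ {0, 1} = ε + (1 - ε) * ι (1/2) := by
    rw [hP₁, geomPart_pair]
    simp
  have hhalf : (0:K) < ι (1/2) := hιpos _ (by norm_num)
  have hP01pos : 0 < P₁ {0, 1} := by
    rw [hP01]; positivity
  refine ⟨?_, ?_, ?_, ?_, ?_⟩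
  · intro A ⟨a, ha⟩
    rw [hP₁]
    by_cases h0 : (0 : ℕ) ∈ A
    · have : 0 ≤ (1 - ε) * ι (geomPart A) :=
        mul_nonneg h1ε.le (hιnonneg _ (geomPart_nonneg A))
      simp only [h0, if_true, mul_one]
      linarith
    · have ha1 : 1 ≤ a := by
        rcases Nat.eq_zero_or_pos a with h | h
        · exact absurd (h ▸ ha) h0
        · exact h
      have hg : 0 < geomPart A :=
        lt_of_lt_of_le (by positivity) (geomPart_ge A ha ha1)
      have : 0 < (1 - ε) * ι (geomPart A) := mul_pos h1ε (hιpos _ hg)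
      simp only [h0, if_false, mul_zero]
      linarith
  · intro A B hAB
    rw [hP₁, hP₁, hP₁, geomPart_union hAB, map_add]
    by_cases hA : (0:ℕ) ∈ A
    · have hB : (0:ℕ) ∉ B := fun hB => (hAB.ne_of_mem hA hB) rfl
      simp only [Set.mem_union, hA, hB, true_or, if_true, if_false, or_false]
      ring
    · by_cases hB : (0:ℕ) ∈ B
      · simp only [Set.mem_union, hA, hB, or_true, if_true, if_false]
        ring
      · simp only [Set.mem_union, hA, hB, or_self, if_false]
        ring
  · rw [hP₁, geomPart_univ, map_one]
    simp
  · exact div_pos (hP0 ▸ hε0) hP01pos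
  · intro n hn
    rw [div_lt_iff₀ hP01pos, hP0, hP01]
    have h4n : ε < ι (1 / (4 * n)) := by
      have := hεinf (4 * n) (by omega)
      simpa using this
    have key : ι (1/n) * (ε + (1 - ε) * ι (1/2)) > ι (1/n) * ((1 - ε) * ι (1/2)) := by
      have hιn : 0 < ι (1/n : ℝ) := hιpos _ (by positivity)
      have : 0 < ι (1/n : ℝ) * ε := mul_pos hιn hε0
      nlinarith
    have hlow : ι (1/n) * ((1 - ε) * ι (1/2)) ≥ ι (1/(4*n)) := by
      have hεq : ε < ι (1/2) := by
        have := hεinf 2 (by norm_num)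
        have h2 : ι ((1:ℝ)/(2:ℕ)) = ι (1/2) := by norm_num
        linarith [h2 ▸ this]
      have h2 : ι (1/2) + ι (1/2) = 1 := by
        rw [← map_add]
        norm_num
      have : (1 - ε) * ι (1/2) ≥ ι (1/2) * ι (1/2) := by nlinarith
      have hmul : ι (1/n) * (ι (1/2) * ι (1/2)) = ι (1/(4*n)) := by
        rw [← map_mul, ← map_mul]
        congr 1
        field_simp
        ring
      calc ι (1/n) * ((1 - ε) * ι (1/2)) ≥ ι (1/n) * (ι (1/2) * ι (1/2)) := by
            apply mul_le_mul_of_nonneg_left this (hιnonneg _ (by positivity))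
        _ = ι (1/(4*n)) := hmul
    linarith
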